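/- If x is obtained from y by a uniform-on-the-right (UR) progressive transfer, then for every f in the class F that is star-shaped from above at 0, the extended Gini social welfare satisfies W_f(x) ≥ W_f(y). -/

import Mathlib

/-- `x` is obtained from `y` by a uniform-on-the-right (UR) progressive
transfer. Since indices are 0-based, position `k : Fin n` has `n - k`
individuals at or above it, so the mean-preservation condition reads
`δ = (n - k) · ε`. -/
def URTransfer {n : ℕ} (x y : Fin n → ℝ) : Prop :=
  Monotone x ∧ Monotone y ∧
  ∃ δ ε : ℝ, 0 < δ ∧ 0 < ε ∧ ∃ h k : Fin n, h < k ∧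
    x h = y h + δ ∧
    (∀ i : Fin n, k ≤ i → x i = y i - ε) ∧
    (∀ g : Fin n, g ≠ h → g < k → x g = y g) ∧
    δ = ((n : ℝ) - (k : ℕ)) * ε

/-- Membership in the class F: `f : [0,1] → [0,1]` continuous, nondecreasing,
with `f 0 = 0` and `f 1 = 1`. -/
def MemF (f : ℝ → ℝ) : Prop :=
  ContinuousOn f (Set.Icc 0 1) ∧ MonotoneOn f (Set.Icc 0 1) ∧
  f 0 = 0 ∧ f 1 = 1 ∧ ∀ t ∈ Set.Icc (0 : ℝ) 1, f t ∈ Set.Icc (0 : ℝ) 1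

/-- `f` is star-shaped (from above) at `ξ ∈ [0,1]`. -/
def StarShapedAt (f : ℝ → ℝ) (ξ : ℝ) : Prop :=
  ∀ s t : ℝ, s ∈ Set.Icc (0 : ℝ) 1 → t ∈ Set.Icc (0 : ℝ) 1 → s ≠ ξ → t ≠ ξ → s < t →
    (f s - f ξ) / (s - ξ) ≤ (f t - f ξ) / (t - ξ)

/-- Extended Gini social welfare. -/
noncomputable def W {n : ℕ} (f : ℝ → ℝ) (z : Fin n → ℝ) : ℝ :=
  ∑ i : Fin n, (f (((n : ℝ) - (i : ℕ)) / n) - f (((n : ℝ) - (i : ℕ) - 1) / n)) * z i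

lemma tele_aux (G : ℕ → ℝ) (k n : ℕ) (hk : k ≤ n) :
    ∑ i ∈ Finset.Ico k n, (G (n - i) - G (n - i - 1)) = G (n - k) - G 0 := by
  rw [Finset.sum_Ico_eq_sum_range]
  set m := n - k with hm
  have h1 : ∀ j ∈ Finset.range m, G (n - (k + j)) - G (n - (k + j) - 1)
      = G (m - j) - G (m - j - 1) := by
    intro j hj; simp only [Finset.mem_range] at hj; congr 2 <;> omega
  rw [Finset.sum_congr rfl h1, ← Finset.sum_range_reflect]
  have h2 : ∀ j ∈ Finset.range m, G (m - (m - 1 - j)) - G (m - (m - 1 - j) - 1)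
      = G (j + 1) - G j := by
    intro j hj; simp only [Finset.mem_range] at hj; congr 2 <;> omega
  rw [Finset.sum_congr rfl h2, Finset.sum_range_sub]

theorem stmt13 {n : ℕ} (hn : 2 ≤ n) (x y : Fin n → ℝ)
    (hUR : URTransfer x y)
    (f : ℝ → ℝ) (hF : MemF f) (hstar : StarShapedAt f 0) :
    W f x ≥ W f y := by
  obtain ⟨hmx, hmy, δ, ε, hδ, hε, h, k, hhk, hxh, hge, hother, hδε⟩ := hUR
  obtain ⟨hcont, hmono, hf0, hf1, hrange⟩ := hF
  set N : ℝ := (n : ℝ) with hNdef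
  have hn2 : (2 : ℝ) ≤ N := by rw [hNdef]; exact_mod_cast hn
  have hN0 : (0 : ℝ) < N := by linarith
  have hkn : (k : ℕ) < n := k.isLt
  have hhn : (h : ℕ) < n := h.isLt
  have hhk' : (h : ℕ) < (k : ℕ) := hhk
  -- the coefficient function
  set c : Fin n → ℝ :=
    fun i => f ((N - (i : ℕ)) / N) - f ((N - (i : ℕ) - 1) / N) with hc
  -- pointwise difference
  have hdiff : ∀ i : Fin n,
      x i - y i = (if i = h then δ else 0) + (if k ≤ i then -ε else 0) := by
    intro i
    by_cases hik : k ≤ i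
    · have hne : i ≠ h := by
        intro e; subst e; exact absurd hhk (not_lt.mpr hik)
      rw [hge i hik, if_neg hne, if_pos hik]; ring
    · by_cases hih : i = h
      · subst hih; rw [hxh, if_pos rfl, if_neg hik]; ring
      · rw [hother i hih (not_le.mp hik), if_neg hih, if_neg hik]; ring
  -- rewrite the welfare difference
  have hW : W f x - W f y
      = c h * δ + (-ε) * ∑ i ∈ Finset.univ.filter (fun i : Fin n => k ≤ i), c i := by
    unfold W
    rw [← Finset.sum_sub_distrib]
    have e1 : ∀ i ∈ (Finset.univ : Finset (Fin n)),
        (f (((n : ℝ) - (i : ℕ)) / n) - f (((n : ℝ) - (i : ℕ) - 1) / n)) * x i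
          - (f (((n : ℝ) - (i : ℕ)) / n) - f (((n : ℝ) - (i : ℕ) - 1) / n)) * y i
        = (if i = h then c i * δ else 0) + (if k ≤ i then c i * (-ε) else 0) := by
      intro i _
      have : (f (((n : ℝ) - (i : ℕ)) / n) - f (((n : ℝ) - (i : ℕ) - 1) / n)) * x i
          - (f (((n : ℝ) - (i : ℕ)) / n) - f (((n : ℝ) - (i : ℕ) - 1) / n)) * y i
          = c i * (x i - y i) := by rw [hc]; ring
      rw [this, hdiff i, mul_add]
      congr 1
      · split <;> ring
      · split <;> ring
    rw [Finset.sum_congr rfl e1, Finset.sum_add_distrib,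
      Finset.sum_ite_eq' Finset.univ h (fun i => c i * δ), if_pos (Finset.mem_univ h),
      ← Finset.sum_filter, ← Finset.sum_mul]
    ring
  -- compute the tail sum by telescoping
  set G : ℕ → ℝ := fun j => f ((j : ℝ) / N) with hG
  have hcC : ∀ i : Fin n, c i = G (n - (i : ℕ)) - G (n - (i : ℕ) - 1) := by
    intro i
    have h1 : ((n - (i : ℕ) : ℕ) : ℝ) = N - (i : ℕ) := by
      rw [hNdef]; push_cast [Nat.cast_sub i.isLt.le]; ring
    have h2 : ((n - (i : ℕ) - 1 : ℕ) : ℝ) = N - (i : ℕ) - 1 := by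
      rw [hNdef]
      have : (n - (i : ℕ) - 1 : ℕ) = n - ((i : ℕ) + 1) := by omega
      rw [this, Nat.cast_sub i.isLt]; push_cast; ring
    rw [hc, hG]; simp only [h1, h2]
  have htail : ∑ i ∈ Finset.univ.filter (fun i : Fin n => k ≤ i), c i
      = G (n - (k : ℕ)) - G 0 := by
    rw [Finset.sum_filter]
    have e2 : ∀ i : Fin n, (if k ≤ i then c i else 0)
        = (fun m : ℕ => if (k : ℕ) ≤ m then G (n - m) - G (n - m - 1) else 0) (i : ℕ) := by
      intro i
      simp only [Fin.le_def, hcC i]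
    rw [Finset.sum_congr rfl (fun i _ => e2 i),
      Fin.sum_univ_eq_sum_range (fun m : ℕ => if (k : ℕ) ≤ m then G (n - m) - G (n - m - 1) else 0) n]
    have e3 : Finset.range n = Finset.Ico 0 n := by rw [Finset.range_eq_Ico]
    rw [e3, ← Finset.sum_Ico_consecutive _ (Nat.zero_le (k : ℕ)) hkn.le]
    have e4 : ∑ m ∈ Finset.Ico 0 (k : ℕ),
        (if (k : ℕ) ≤ m then G (n - m) - G (n - m - 1) else 0) = 0 := by
      apply Finset.sum_eq_zero
      intro m hm
      simp only [Finset.mem_Ico] at hm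
      rw [if_neg (by omega)]
    have e5 : ∑ m ∈ Finset.Ico (k : ℕ) n,
        (if (k : ℕ) ≤ m then G (n - m) - G (n - m - 1) else 0)
        = ∑ m ∈ Finset.Ico (k : ℕ) n, (G (n - m) - G (n - m - 1)) := by
      apply Finset.sum_congr rfl
      intro m hm
      simp only [Finset.mem_Ico] at hm
      rw [if_pos hm.1]
    rw [e4, e5, zero_add, tele_aux G (k : ℕ) n hkn.le]
  -- real quantities
  set t : ℝ := (N - (k : ℕ)) / N with ht
  set a : ℝ := (N - (h : ℕ) - 1) / N with ha
  set b : ℝ := (N - (h : ℕ)) / N with hb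
  have hkR : ((k : ℕ) : ℝ) ≤ N - 1 := by
    rw [hNdef]
    have : ((k : ℕ) : ℝ) + 1 ≤ (n : ℝ) := by exact_mod_cast hkn
    linarith
  have hhR : ((h : ℕ) : ℝ) + 1 ≤ ((k : ℕ) : ℝ) := by exact_mod_cast hhk'
  have hh0 : (0 : ℝ) ≤ ((h : ℕ) : ℝ) := Nat.cast_nonneg _
  have htpos : 0 < t := by
    rw [ht]; apply div_pos _ hN0; linarith
  have hta : t ≤ a := by
    rw [ht, ha, div_le_div_iff_of_pos_right hN0]; linarith
  have hab : a < b := by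
    rw [ha, hb, div_lt_div_iff_of_pos_right hN0]; linarith
  have hb1 : b ≤ 1 := by
    rw [hb, div_le_one hN0]; linarith
  have ha0 : 0 < a := lt_of_lt_of_le htpos hta
  have hbpos : 0 < b := lt_trans ha0 hab
  have hamem : a ∈ Set.Icc (0 : ℝ) 1 := ⟨ha0.le, le_of_lt (lt_of_lt_of_le hab hb1)⟩
  have hbmem : b ∈ Set.Icc (0 : ℝ) 1 := ⟨hbpos.le, hb1⟩
  have htmem : t ∈ Set.Icc (0 : ℝ) 1 := ⟨htpos.le, le_trans hta hamem.2⟩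
  -- star-shapedness gives increasing slopes from 0
  have hq : ∀ s u : ℝ, 0 < s → s ≤ u → u ≤ 1 → f s / s ≤ f u / u := by
    intro s u hs hsu hu1
    rcases eq_or_lt_of_le hsu with rfl | hlt
    · exact le_refl _
    · have := hstar s u ⟨hs.le, by linarith⟩ ⟨by linarith, hu1⟩
        (ne_of_gt hs) (ne_of_gt (by linarith)) hlt
      simpa [hf0] using this
  have hft0 : 0 ≤ f t := by
    have := hmono (Set.left_mem_Icc.mpr (by norm_num)) htmem htpos.le
    rwa [hf0] at this
  have hfa0 : 0 ≤ f a := by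
    have := hmono (Set.left_mem_Icc.mpr (by norm_num)) hamem ha0.le
    rwa [hf0] at this
  have h1 : f t / t ≤ f a / a := hq t a htpos hta hamem.2
  have h2 : f a / a ≤ f b / b := hq a b ha0 hab.le hb1
  -- key slope inequality: f b - f a ≥ (b - a) * (f t / t)
  have hkey : (b - a) * (f t / t) ≤ f b - f a := by
    have hfb : b * (f a / a) ≤ f b := by
      have := mul_le_mul_of_nonneg_left h2 hbpos.le
      rwa [mul_div_cancel₀ _ (ne_of_gt hbpos)] at this
    have h3 : a * (f a / a) = f a := mul_div_cancel₀ _ (ne_of_gt ha0)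
    have h4 : (b - a) * (f t / t) ≤ (b - a) * (f a / a) :=
      mul_le_mul_of_nonneg_left h1 (by linarith)
    nlinarith [hfb, h3, h4]
  -- assemble
  have hG0 : G 0 = 0 := by rw [hG]; simp [hf0]
  have hGt : G (n - (k : ℕ)) = f t := by
    have hcast : ((n - (k : ℕ) : ℕ) : ℝ) = N - ((k : ℕ) : ℝ) := by
      rw [hNdef, Nat.cast_sub hkn.le]
    show f (((n - (k : ℕ) : ℕ) : ℝ) / N) = f t
    rw [hcast, ht]
  have hch : c h = f b - f a := by rw [hc, hb, ha]
  have hba : b - a = 1 / N := by rw [hb, ha]; field_simp; ring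
  have hNt : N - (k : ℕ) = N * t := by
    rw [ht]; field_simp
  have hfinal : 0 ≤ W f x - W f y := by
    rw [hW, htail, hG0, hGt, hch, hδε, hNt, sub_zero]
    have hexp : (f b - f a) * (N * t * ε) + -ε * f t
        = N * t * ε * ((f b - f a) - (1 / N) * (f t / t)) := by
      field_simp
      ring
    rw [hexp]
    apply mul_nonneg
    · positivity
    · rw [← hba]; linarith [hkey]
  linarith [hfinal]
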